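/- Let T > 0, k ≥ 0, and let g, G : ℝ^(k+1) → ℝ be continuous with g(0) = 0, G(0) = 0, and G either nonnegative everywhere or nonpositive everywhere. Let u : [0,T)×ℝ → ℝ be such that u(t,·) is k-times continuously differentiable for each t with all derivatives up to order k continuous in x; the function x ↦ G(u(t,x), ∂ₓu(t,x), …, ∂ₓᵏu(t,x)) is continuous, bounded and integrable for each t; ∂ₜu exists on (0,T)×ℝ; and the equation ∂ₜu(t,x) + g(u(t,x), …, ∂ₓᵏu(t,x)) = (∂ₓΛ⁻²[G(u(t,·), …, ∂ₓᵏu(t,·))])(x) holds for all (t,x) ∈ (0,T)×ℝ. Assume: (i) for each t, if G(u(t,x), …, ∂ₓᵏu(t,x)) = 0 for all x ∈ ℝ then u(t,x) = 0 for all x ∈ ℝ; (ii) u vanishes identically on a nonempty open set Ω ⊆ (0,T)×ℝ; (iii) either there is a conserved density h for u, or the uniqueness property holds that u(t₁,·) ≡ 0 for some t₁ ∈ (0,T) implies u ≡ 0. Then u(t,x) = 0 for all (t,x) ∈ [0,T)×ℝ. -/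

import Mathlib

open MeasureTheory Set

/-- The inverse Helmholtz operator `Λ⁻² = (1 - ∂ₓ²)⁻¹` on the line, given by
convolution with the kernel `e^{-|x|}/2`. -/
noncomputable def lam2 (w : ℝ → ℝ) (x : ℝ) : ℝ :=
  (1/2) * ∫ y : ℝ, Real.exp (-|x - y|) * w y

/-- **Theorem 3.1.** Unique continuation for scalar equations
`uₜ + g([u]) = ∂ₓ Λ⁻² G([u])`, where `g`, `G` depend on the `k`-jet of `u`, `G` is
signed, vanishing of `G([u(t,·)])` forces `u(t,·) ≡ 0`, `u` vanishes on a nonempty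
open set, and either a conserved density exists (C0) or the uniqueness property (C7')
holds. -/

lemma iteratedDeriv_eq_zero_of_eventuallyEq {f : ℝ → ℝ} {x : ℝ}
    (hf : f =ᶠ[nhds x] 0) (n : ℕ) : iteratedDeriv n f x = 0 := by
  induction n generalizing f with
  | zero => simpa using hf.eq_of_nhds
  | succ n ih =>
    rw [iteratedDeriv_succ']
    apply ih
    have h := hf.deriv
    have : deriv (0 : ℝ → ℝ) = 0 := by funext y; simp [Pi.zero_def]
    rwa [this] at h

lemma eq_zero_of_integral_eq_zero {f : ℝ → ℝ} (hc : Continuous f) (hi : Integrable f)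
    (hsign : (∀ x, 0 ≤ f x) ∨ (∀ x, f x ≤ 0)) (h0 : (∫ x, f x) = 0) : ∀ x, f x = 0 := by
  rcases hsign with hs | hs
  · have hae : f =ᵐ[volume] 0 := (integral_eq_zero_iff_of_nonneg hs hi).1 h0
    have := (hc.ae_eq_iff_eq volume continuous_zero).1 hae
    intro x; exact congrFun this x
  · have hs' : ∀ x, 0 ≤ (-f) x := fun x => by simpa using hs x
    have hi' : Integrable (-f) := hi.neg
    have h0' : (∫ x, (-f) x) = 0 := by simp [integral_neg, h0]
    have hae : (-f) =ᵐ[volume] 0 := (integral_eq_zero_iff_of_nonneg hs' hi').1 h0'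
    have := (hc.neg.ae_eq_iff_eq volume continuous_zero).1 hae
    intro x; have h2 := congrFun this x
    simp only [Pi.neg_apply, Pi.zero_apply, neg_eq_zero] at h2; exact h2

section key
variable {w : ℝ → ℝ}

lemma intOnIic (hc : Continuous w) (hi : Integrable w) (x : ℝ) :
    IntegrableOn (fun y => Real.exp y * w y) (Iic x) := by
  apply Integrable.mono' ((hi.abs.const_mul (Real.exp x)).integrableOn)
  · exact (Real.continuous_exp.mul hc).aestronglyMeasurable
  · filter_upwards [ae_restrict_mem measurableSet_Iic] with y hy
    rw [norm_mul, Real.norm_eq_abs, Real.norm_eq_abs, abs_of_pos (Real.exp_pos y)]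
    gcongr
    exact hy

lemma intOnIoi (hc : Continuous w) (hi : Integrable w) (x : ℝ) :
    IntegrableOn (fun y => Real.exp (-y) * w y) (Ioi x) := by
  apply Integrable.mono' ((hi.abs.const_mul (Real.exp (-x))).integrableOn)
  · exact ((Real.continuous_exp.comp continuous_neg).mul hc).aestronglyMeasurable
  · filter_upwards [ae_restrict_mem measurableSet_Ioi] with y hy
    rw [norm_mul, Real.norm_eq_abs, Real.norm_eq_abs, abs_of_pos (Real.exp_pos (-y))]
    gcongr
    exact le_of_lt hy

lemma intKernel (hc : Continuous w) (hi : Integrable w) (x : ℝ) :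
    Integrable (fun y => Real.exp (-|x - y|) * w y) := by
  apply Integrable.mono' hi.abs
  · exact ((Real.continuous_exp.comp (continuous_const.sub continuous_id).abs.neg).mul
      hc).aestronglyMeasurable
  · filter_upwards with y
    rw [norm_mul, Real.norm_eq_abs, Real.norm_eq_abs, abs_of_pos (Real.exp_pos _)]
    have h1 : Real.exp (-|x - y|) ≤ 1 := Real.exp_le_one_iff.2 (neg_nonpos.2 (abs_nonneg _))
    nlinarith [abs_nonneg (w y)]

noncomputable def Afun (w : ℝ → ℝ) (x : ℝ) : ℝ := ∫ y in Iic x, Real.exp y * w y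
noncomputable def Bfun (w : ℝ → ℝ) (x : ℝ) : ℝ := ∫ y in Ioi x, Real.exp (-y) * w y

lemma lam2_eq (hc : Continuous w) (hi : Integrable w) (x : ℝ) :
    lam2 w x = (1/2) * (Real.exp (-x) * Afun w x + Real.exp x * Bfun w x) := by
  unfold lam2 Afun Bfun
  congr 1
  have hL : IntegrableOn (fun y => Real.exp (-|x - y|) * w y) (Iic x) :=
    (intKernel hc hi x).integrableOn
  have hR : IntegrableOn (fun y => Real.exp (-|x - y|) * w y) (Ioi x) :=
    (intKernel hc hi x).integrableOn
  have hsplit := intervalIntegral.integral_Iic_add_Ioi hL hR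
  rw [← hsplit]
  have h1 : (∫ y in Iic x, Real.exp (-|x - y|) * w y)
      = Real.exp (-x) * ∫ y in Iic x, Real.exp y * w y := by
    rw [← integral_const_mul]
    apply setIntegral_congr_fun measurableSet_Iic
    intro y hy
    show Real.exp (-|x - y|) * w y = Real.exp (-x) * (Real.exp y * w y)
    have h : |x - y| = x - y := abs_of_nonneg (by simpa using (hy : y ≤ x))
    rw [h, ← mul_assoc, ← Real.exp_add]
    ring_nf
  have h2 : (∫ y in Ioi x, Real.exp (-|x - y|) * w y)
      = Real.exp x * ∫ y in Ioi x, Real.exp (-y) * w y := by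
    rw [← integral_const_mul]
    apply setIntegral_congr_fun measurableSet_Ioi
    intro y hy
    show Real.exp (-|x - y|) * w y = Real.exp x * (Real.exp (-y) * w y)
    have h : |x - y| = y - x := by
      rw [abs_sub_comm]; exact abs_of_nonneg (by linarith [mem_Ioi.1 hy])
    rw [h, ← mul_assoc, ← Real.exp_add]
    ring_nf
  rw [h1, h2]

lemma hasDerivAt_Afun (hc : Continuous w) (hi : Integrable w) (x : ℝ) :
    HasDerivAt (Afun w) (Real.exp x * w x) x := by
  have key : ∀ z, Afun w z = Afun w 0 + ∫ y in (0:ℝ)..z, Real.exp y * w y := by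
    intro z
    have := intervalIntegral.integral_Iic_sub_Iic (intOnIic hc hi 0) (intOnIic hc hi z)
    unfold Afun
    linarith [this]
  have hF : HasDerivAt (fun z => ∫ y in (0:ℝ)..z, Real.exp y * w y) (Real.exp x * w x) x :=
    intervalIntegral.integral_hasDerivAt_right
      ((Real.continuous_exp.mul hc).intervalIntegrable 0 x)
      ((Real.continuous_exp.mul hc).stronglyMeasurableAtFilter _ _)
      ((Real.continuous_exp.mul hc).continuousAt)
  have := (hF.const_add (Afun w 0))
  exact (funext key : Afun w = _) ▸ this

lemma Bfun_split (hc : Continuous w) (hi : Integrable w) {a b : ℝ} (hab : a ≤ b) :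
    Bfun w a = (∫ y in a..b, Real.exp (-y) * w y) + Bfun w b := by
  unfold Bfun
  rw [intervalIntegral.integral_of_le hab,
    ← setIntegral_union (Ioc_disjoint_Ioi le_rfl) measurableSet_Ioi
      ((intOnIoi hc hi a).mono_set Ioc_subset_Ioi_self) (intOnIoi hc hi b),
    Ioc_union_Ioi_eq_Ioi hab]

lemma hasDerivAt_Bfun (hc : Continuous w) (hi : Integrable w) (x : ℝ) :
    HasDerivAt (Bfun w) (-(Real.exp (-x) * w x)) x := by
  have key : ∀ z, Bfun w z = Bfun w 0 - ∫ y in (0:ℝ)..z, Real.exp (-y) * w y := by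
    intro z
    rcases le_total 0 z with h | h
    · have := Bfun_split hc hi h; linarith
    · have := Bfun_split hc hi h
      rw [intervalIntegral.integral_symm] at this
      linarith
  have hcont : Continuous fun y : ℝ => Real.exp (-y) * w y :=
    (Real.continuous_exp.comp continuous_neg).mul hc
  have hF : HasDerivAt (fun z => ∫ y in (0:ℝ)..z, Real.exp (-y) * w y) (Real.exp (-x) * w x) x :=
    intervalIntegral.integral_hasDerivAt_right (hcont.intervalIntegrable 0 x)
      (hcont.stronglyMeasurableAtFilter _ _) hcont.continuousAt
  have := (hF.const_sub (Bfun w 0))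
  have heq : (fun z => Bfun w 0 - ∫ y in (0:ℝ)..z, Real.exp (-y) * w y) = Bfun w := by
    funext z; exact (key z).symm
  rw [heq] at this
  simpa using this

lemma hasDerivAt_lam2 (hc : Continuous w) (hi : Integrable w) (x : ℝ) :
    HasDerivAt (lam2 w)
      ((1/2) * (Real.exp x * Bfun w x - Real.exp (-x) * Afun w x)) x := by
  have hEneg : HasDerivAt (fun z : ℝ => Real.exp (-z)) (-Real.exp (-x)) x := by
    simpa using (hasDerivAt_id' x).neg.exp
  have hA := hasDerivAt_Afun hc hi x
  have hB := hasDerivAt_Bfun hc hi x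
  have hE : HasDerivAt Real.exp (Real.exp x) x := Real.hasDerivAt_exp x
  have htot := ((hEneg.mul hA).add (hE.mul hB)).const_mul (1/2 : ℝ)
  have heq : (fun z => (1/2 : ℝ) * (Real.exp (-z) * Afun w z + Real.exp z * Bfun w z))
      = lam2 w := by funext z; exact (lam2_eq hc hi z).symm
  simp only [Pi.mul_apply, Pi.add_apply] at htot
  rw [heq] at htot
  convert htot using 1
  · rfl
  · rfl
  ring

noncomputable def Dfun (w : ℝ → ℝ) (x : ℝ) : ℝ :=
  (1/2) * (Real.exp x * Bfun w x - Real.exp (-x) * Afun w x)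

lemma hasDerivAt_Dfun (hc : Continuous w) (hi : Integrable w) (x : ℝ) :
    HasDerivAt (Dfun w) (lam2 w x - w x) x := by
  have hEneg : HasDerivAt (fun z : ℝ => Real.exp (-z)) (-Real.exp (-x)) x := by
    simpa using (hasDerivAt_id' x).neg.exp
  have hA := hasDerivAt_Afun hc hi x
  have hB := hasDerivAt_Bfun hc hi x
  have hE : HasDerivAt Real.exp (Real.exp x) x := Real.hasDerivAt_exp x
  have htot := ((hE.mul hB).sub (hEneg.mul hA)).const_mul (1/2 : ℝ)
  convert htot using 1
  · rfl
  · rfl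
  · rfl
  have h1 : Real.exp (-x) * Real.exp x = 1 := by rw [← Real.exp_add]; simp
  rw [lam2_eq hc hi x]
  linear_combination (w x) * h1

lemma w_eq_zero_of_deriv_lam2_zero (hc : Continuous w) (hi : Integrable w)
    (hsign : (∀ x, 0 ≤ w x) ∨ (∀ x, w x ≤ 0)) (x₀ ε : ℝ) (hε : 0 < ε)
    (hd : ∀ x, |x - x₀| < ε → deriv (lam2 w) x = 0) (hw0 : w x₀ = 0) :
    ∀ x, w x = 0 := by
  have hDev : Dfun w =ᶠ[nhds x₀] 0 := by
    have hmem : Metric.ball x₀ ε ∈ nhds x₀ := Metric.ball_mem_nhds x₀ hε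
    filter_upwards [hmem] with x hx
    have hx' : |x - x₀| < ε := by simpa [Real.dist_eq] using hx
    simp only [Pi.zero_apply]
    unfold Dfun
    rw [← (hasDerivAt_lam2 hc hi x).deriv]
    exact hd x hx'
  have hder0 : deriv (Dfun w) x₀ = 0 := by
    rw [hDev.deriv_eq]
    simp [Pi.zero_def]
  have hD := (hasDerivAt_Dfun hc hi x₀).deriv
  have hlam : lam2 w x₀ = 0 := by
    rw [hder0] at hD
    linarith [hD, hw0]
  have hint : (∫ y, Real.exp (-|x₀ - y|) * w y) = 0 := by
    unfold lam2 at hlam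
    linarith
  have hker := eq_zero_of_integral_eq_zero
    (((Real.continuous_exp.comp (continuous_const.sub continuous_id).abs.neg).mul hc))
    (intKernel hc hi x₀)
    (by
      rcases hsign with hs | hs
      · exact Or.inl fun y => mul_nonneg (Real.exp_pos _).le (hs y)
      · exact Or.inr fun y => mul_nonpos_of_nonneg_of_nonpos (Real.exp_pos _).le (hs y))
    hint
  intro x
  have := hker x
  have hexp := Real.exp_pos (-|x₀ - x|)
  exact (mul_eq_zero.1 this).resolve_left (ne_of_gt hexp)

end key

theorem unique_continuation_nonlocal_scalar
    (T : ℝ) (hT : 0 < T) (k : ℕ)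
    (g G : (Fin (k+1) → ℝ) → ℝ)
    (hgcont : Continuous g) (hGcont : Continuous G)
    (hg0 : g 0 = 0) (hG0 : G 0 = 0)
    (hGsign : (∀ y, 0 ≤ G y) ∨ (∀ y, G y ≤ 0))
    (u : ℝ → ℝ → ℝ)
    -- u(t,·) is k-times continuously differentiable
    (hreg : ∀ t ∈ Set.Ico (0:ℝ) T, ContDiff ℝ (k : ℕ∞) (u t))
    -- x ↦ G(k-jet of u(t,·) at x) is continuous, bounded and integrable
    (hGreg : ∀ t ∈ Set.Ico (0:ℝ) T,
      Continuous (fun x : ℝ => G (fun i => iteratedDeriv i.1 (u t) x)) ∧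
      (∃ C : ℝ, ∀ x : ℝ, |G (fun i => iteratedDeriv i.1 (u t) x)| ≤ C) ∧
      Integrable (fun x : ℝ => G (fun i => iteratedDeriv i.1 (u t) x)))
    -- ∂ₜu exists on (0,T) × ℝ
    (hut : ∀ t ∈ Set.Ioo (0:ℝ) T, ∀ x : ℝ, DifferentiableAt ℝ (fun s => u s x) t)
    -- the equation uₜ + g([u]) = ∂ₓΛ⁻²G([u]) holds pointwise
    (heq : ∀ t ∈ Set.Ioo (0:ℝ) T, ∀ x : ℝ,
      deriv (fun s => u s x) t + g (fun i => iteratedDeriv i.1 (u t) x) =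
        deriv (lam2 (fun y => G (fun i => iteratedDeriv i.1 (u t) y))) x)
    -- (i) vanishing of G([u(t,·)]) implies vanishing of u(t,·)
    (hGvan : ∀ t ∈ Set.Ico (0:ℝ) T,
      (∀ x : ℝ, G (fun i => iteratedDeriv i.1 (u t) x) = 0) → ∀ x : ℝ, u t x = 0)
    -- (ii) u vanishes identically on a nonempty open set Ω ⊆ (0,T) × ℝ
    (Ω : Set (ℝ × ℝ)) (hΩopen : IsOpen Ω) (hΩne : Ω.Nonempty)
    (hΩsub : Ω ⊆ Set.Ioo (0:ℝ) T ×ˢ Set.univ)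
    (hvan : ∀ p ∈ Ω, u p.1 p.2 = 0)
    -- (iii) either a conserved density exists, or the uniqueness property holds
    (hiii :
      (∃ h : (Fin (k+1) → ℝ) → ℝ, Continuous h ∧
        ((∀ y, 0 ≤ h y) ∨ (∀ y, h y ≤ 0)) ∧
        (∀ y, h y = 0 ↔ y = 0) ∧
        (∀ t ∈ Set.Ico (0:ℝ) T,
          Integrable (fun x : ℝ => h (fun i => iteratedDeriv i.1 (u t) x))) ∧
        (∃ c : ℝ, ∀ t ∈ Set.Ico (0:ℝ) T,
          (∫ x : ℝ, h (fun i => iteratedDeriv i.1 (u t) x)) = c)) ∨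
      (∀ t₁ ∈ Set.Ioo (0:ℝ) T, (∀ x : ℝ, u t₁ x = 0) →
        ∀ t ∈ Set.Ico (0:ℝ) T, ∀ x : ℝ, u t x = 0)) :
    ∀ t ∈ Set.Ico (0:ℝ) T, ∀ x : ℝ, u t x = 0 := by
  obtain ⟨p, hp⟩ := hΩne
  obtain ⟨ε, hε, hball⟩ := Metric.isOpen_iff.1 hΩopen p hp
  obtain ⟨t₁, x₀⟩ := p
  have ht₁ : t₁ ∈ Set.Ioo (0:ℝ) T := (hΩsub hp).1
  have ht₁' : t₁ ∈ Set.Ico (0:ℝ) T := ⟨le_of_lt ht₁.1, ht₁.2⟩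
  have hvan' : ∀ s x : ℝ, |s - t₁| < ε → |x - x₀| < ε → u s x = 0 := by
    intro s x hs hx
    exact hvan (s, x) (hball (by
      simp only [Metric.mem_ball, Prod.dist_eq, Real.dist_eq]
      exact max_lt hs hx))
  have hjet : ∀ x : ℝ, |x - x₀| < ε → ∀ n, iteratedDeriv n (u t₁) x = 0 := by
    intro x hx n
    apply iteratedDeriv_eq_zero_of_eventuallyEq _ n
    have hmem : Metric.ball x₀ ε ∈ nhds x :=
      Metric.isOpen_ball.mem_nhds (by simpa [Metric.mem_ball, Real.dist_eq] using hx)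
    filter_upwards [hmem] with y hy
    exact hvan' t₁ y (by simpa using hε) (by simpa [Real.dist_eq] using hy)
  obtain ⟨hwc, hwb, hwi⟩ := hGreg t₁ ht₁'
  have hwsign : (∀ x : ℝ, 0 ≤ G (fun i => iteratedDeriv i.1 (u t₁) x)) ∨
      (∀ x : ℝ, G (fun i => iteratedDeriv i.1 (u t₁) x) ≤ 0) := by
    rcases hGsign with h | h
    · exact Or.inl fun x => h _
    · exact Or.inr fun x => h _
  have hw0 : ∀ x, |x - x₀| < ε → G (fun i => iteratedDeriv i.1 (u t₁) x) = 0 := by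
    intro x hx
    have hjx : (fun i : Fin (k+1) => iteratedDeriv i.1 (u t₁) x) = 0 := by
      funext i; exact hjet x hx i.1
    rw [hjx, hG0]
  have hderiv0 : ∀ x, |x - x₀| < ε →
      deriv (lam2 (fun y => G (fun i => iteratedDeriv i.1 (u t₁) y))) x = 0 := by
    intro x hx
    have ht := heq t₁ ht₁ x
    have hjx : (fun i : Fin (k+1) => iteratedDeriv i.1 (u t₁) x) = 0 := by
      funext i; exact hjet x hx i.1
    have hdt : deriv (fun s => u s x) t₁ = 0 := by
      have hev : (fun s => u s x) =ᶠ[nhds t₁] (fun _ => (0:ℝ)) := by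
        filter_upwards [Metric.ball_mem_nhds t₁ hε] with s hs
        exact hvan' s x (by simpa [Real.dist_eq] using hs) hx
      rw [hev.deriv_eq, deriv_const]
    rw [hdt, hjx, hg0, zero_add] at ht
    exact ht.symm
  have hwzero : ∀ x, G (fun i => iteratedDeriv i.1 (u t₁) x) = 0 :=
    w_eq_zero_of_deriv_lam2_zero hwc hwi hwsign x₀ ε hε hderiv0
      (hw0 x₀ (by simpa using hε))
  have hu1 : ∀ x, u t₁ x = 0 := hGvan t₁ ht₁' hwzero
  rcases hiii with ⟨h, hhc, hhsign, hhiff, hhint, c, hhcons⟩ | huniq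
  · intro t ht x
    have hjet1 : ∀ y : ℝ, (fun i : Fin (k+1) => iteratedDeriv i.1 (u t₁) y) = 0 := by
      intro y; funext i
      exact iteratedDeriv_eq_zero_of_eventuallyEq
        (Filter.Eventually.of_forall fun z => hu1 z) i.1
    have hc0 : c = 0 := by
      rw [← hhcons t₁ ht₁']
      have hfz : (fun y : ℝ => h (fun i => iteratedDeriv i.1 (u t₁) y)) = fun _ => (0:ℝ) := by
        funext y; rw [hjet1 y]; exact (hhiff 0).2 rfl
      rw [hfz]; simp
    have hjc : Continuous (fun y : ℝ => h (fun i : Fin (k+1) => iteratedDeriv i.1 (u t) y)) := by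
      apply hhc.comp
      apply continuous_pi
      intro i
      exact (hreg t ht).continuous_iteratedDeriv i.1
        (by exact_mod_cast Nat.lt_succ_iff.1 i.isLt)
    have hsign' : (∀ y : ℝ, 0 ≤ h (fun i : Fin (k+1) => iteratedDeriv i.1 (u t) y)) ∨
        (∀ y : ℝ, h (fun i : Fin (k+1) => iteratedDeriv i.1 (u t) y) ≤ 0) := by
      rcases hhsign with hs | hs
      · exact Or.inl fun y => hs _
      · exact Or.inr fun y => hs _
    have hint0 : (∫ y : ℝ, h (fun i => iteratedDeriv i.1 (u t) y)) = 0 := by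
      rw [hhcons t ht, hc0]
    have hz := eq_zero_of_integral_eq_zero hjc (hhint t ht) hsign' hint0
    have hj0 := (hhiff _).1 (hz x)
    have := congrFun hj0 (0 : Fin (k+1))
    simpa [iteratedDeriv_zero] using this
  · exact huniq t₁ ht₁ hu1
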